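/- Let P_N = [[S, T], [Tᵀ, R]] be a symmetric real (a+b)×(a+b) matrix in block form with S of size a×a and R of size b×b, and suppose p̲·I ≤ P_N ≤ p̄·I for some constants 0 < p̲ ≤ p̄. Then R is invertible, |T Tᵀ| ≤ p̄² (operator norm), and the Schur complement P = S − T R⁻¹ Tᵀ satisfies p̲·I_a ≤ P ≤ p̄(1 + p̄²/p̲²)·I_a. -/

import Mathlib

open Matrix
open scoped Matrix.Norms.L2Operator

private lemma euc_norm_sq {n : Type*} [Fintype n] (u : EuclideanSpace ℝ n) :
    ‖u‖ ^ 2 = (fun i => u i) ⬝ᵥ (fun i => u i) := by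
  rw [EuclideanSpace.norm_eq, Real.sq_sqrt (by positivity)]
  simp [dotProduct, Real.norm_eq_abs, sq_abs, sq]

private lemma opnorm_le_of_quad {m n : Type*} [Fintype m] [Fintype n] [DecidableEq n]
    (A : Matrix m n ℝ) {c : ℝ} (hc : 0 ≤ c)
    (h : ∀ v : n → ℝ, (A *ᵥ v) ⬝ᵥ (A *ᵥ v) ≤ c ^ 2 * (v ⬝ᵥ v)) : ‖A‖ ≤ c := by
  rw [Matrix.l2_opNorm_def]
  refine ContinuousLinearMap.opNorm_le_bound _ hc fun x => ?_
  have h1 : ‖(LinearEquiv.trans Matrix.toEuclideanLin LinearMap.toContinuousLinearMap A) x‖ ^ 2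
      ≤ (c * ‖x‖) ^ 2 := by
    have e1 : ((LinearEquiv.trans Matrix.toEuclideanLin LinearMap.toContinuousLinearMap A) x
        : EuclideanSpace ℝ m) = (WithLp.equiv 2 (m → ℝ)).symm
        (A *ᵥ (WithLp.equiv 2 (n → ℝ)) x) := rfl
    rw [e1, euc_norm_sq]
    have := h ((WithLp.equiv 2 (n → ℝ)) x)
    have e2 : ‖x‖ ^ 2 = ((WithLp.equiv 2 (n → ℝ)) x) ⬝ᵥ ((WithLp.equiv 2 (n → ℝ)) x) := by
      rw [euc_norm_sq x]; rfl
    calc (fun i => ((WithLp.equiv 2 (m → ℝ)).symm (A *ᵥ (WithLp.equiv 2 (n → ℝ)) x)) i) ⬝ᵥ _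
        = (A *ᵥ (WithLp.equiv 2 (n → ℝ)) x) ⬝ᵥ (A *ᵥ (WithLp.equiv 2 (n → ℝ)) x) := rfl
      _ ≤ c ^ 2 * (((WithLp.equiv 2 (n → ℝ)) x) ⬝ᵥ ((WithLp.equiv 2 (n → ℝ)) x)) := this
      _ = (c * ‖x‖) ^ 2 := by rw [mul_pow, e2]
  have h2 : (0:ℝ) ≤ ‖(LinearEquiv.trans Matrix.toEuclideanLin LinearMap.toContinuousLinearMap A) x‖ :=
    norm_nonneg _
  nlinarith [mul_nonneg hc (norm_nonneg x)]

/-- Let `P_N = [[S, T], [Tᵀ, R]]` be a symmetric real `(a+b) × (a+b)` matrix in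
block form, with `p̲ I ≤ P_N ≤ p̄ I` for constants `0 < p̲ ≤ p̄`.  Then `R` is invertible, the
(ℓ²-)operator norm of `T Tᵀ` is at most `p̄²`, and the Schur complement `P = S − T R⁻¹ Tᵀ`
satisfies `p̲ I ≤ P ≤ p̄ (1 + p̄²/p̲²) I`.  (`M ≤ M'` means `M' − M` is positive semidefinite.) -/
theorem stmt5_schur_complement_bounds (a b : ℕ)
    (S : Matrix (Fin a) (Fin a) ℝ) (T : Matrix (Fin a) (Fin b) ℝ)
    (R : Matrix (Fin b) (Fin b) ℝ)
    (hsymm : (Matrix.fromBlocks S T Tᵀ R).IsSymm)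
    (pl pu : ℝ) (hpl : 0 < pl) (hplu : pl ≤ pu)
    (hlow : (Matrix.fromBlocks S T Tᵀ R - pl • (1 : Matrix (Fin a ⊕ Fin b) (Fin a ⊕ Fin b) ℝ)).PosSemidef)
    (hup : (pu • (1 : Matrix (Fin a ⊕ Fin b) (Fin a ⊕ Fin b) ℝ) - Matrix.fromBlocks S T Tᵀ R).PosSemidef) :
    IsUnit R ∧
    ‖T * Tᵀ‖ ≤ pu ^ 2 ∧
    (S - T * R⁻¹ * Tᵀ - pl • (1 : Matrix (Fin a) (Fin a) ℝ)).PosSemidef ∧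
    ((pu * (1 + pu ^ 2 / pl ^ 2)) • (1 : Matrix (Fin a) (Fin a) ℝ) -
        (S - T * R⁻¹ * Tᵀ)).PosSemidef := by
  have hpu : 0 < pu := lt_of_lt_of_le hpl hplu
  -- symmetry of the blocks
  have hS : Sᵀ = S := by
    have := congrArg Matrix.toBlocks₁₁ hsymm
    simpa [Matrix.IsSymm, Matrix.fromBlocks_transpose, Matrix.toBlocks_fromBlocks₁₁] using this
  have hR : Rᵀ = R := by
    have := congrArg Matrix.toBlocks₂₂ hsymm
    simpa [Matrix.IsSymm, Matrix.fromBlocks_transpose, Matrix.toBlocks_fromBlocks₂₂] using this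
  -- quadratic form expansion
  have quad : ∀ (x : Fin a → ℝ) (y : Fin b → ℝ),
      (Sum.elim x y) ⬝ᵥ ((Matrix.fromBlocks S T Tᵀ R) *ᵥ (Sum.elim x y)) =
        x ⬝ᵥ (S *ᵥ x) + x ⬝ᵥ (T *ᵥ y) + y ⬝ᵥ (Tᵀ *ᵥ x) + y ⬝ᵥ (R *ᵥ y) := by
    intro x y
    rw [Matrix.fromBlocks_mulVec, sumElim_dotProduct_sumElim]
    simp [dotProduct_add]
    ring
  have hlowQ : ∀ (x : Fin a → ℝ) (y : Fin b → ℝ),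
      pl * (x ⬝ᵥ x + y ⬝ᵥ y) ≤
        x ⬝ᵥ (S *ᵥ x) + x ⬝ᵥ (T *ᵥ y) + y ⬝ᵥ (Tᵀ *ᵥ x) + y ⬝ᵥ (R *ᵥ y) := by
    intro x y
    have := hlow.dotProduct_mulVec_nonneg (Sum.elim x y)
    rw [Matrix.sub_mulVec, dotProduct_sub, Matrix.smul_mulVec,
      Matrix.one_mulVec, star_trivial, quad] at this
    have e : (Sum.elim x y) ⬝ᵥ (pl • Sum.elim x y) = pl * (x ⬝ᵥ x + y ⬝ᵥ y) := by
      rw [dotProduct_smul, ← sumElim_dotProduct_sumElim]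
      simp [smul_eq_mul]
    rw [e] at this
    linarith
  have hupQ : ∀ (x : Fin a → ℝ) (y : Fin b → ℝ),
      x ⬝ᵥ (S *ᵥ x) + x ⬝ᵥ (T *ᵥ y) + y ⬝ᵥ (Tᵀ *ᵥ x) + y ⬝ᵥ (R *ᵥ y) ≤
        pu * (x ⬝ᵥ x + y ⬝ᵥ y) := by
    intro x y
    have := hup.dotProduct_mulVec_nonneg (Sum.elim x y)
    rw [Matrix.sub_mulVec, dotProduct_sub, Matrix.smul_mulVec,
      Matrix.one_mulVec, star_trivial, quad] at this
    have e : (Sum.elim x y) ⬝ᵥ (pu • Sum.elim x y) = pu * (x ⬝ᵥ x + y ⬝ᵥ y) := by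
      rw [dotProduct_smul, ← sumElim_dotProduct_sumElim]
      simp [smul_eq_mul]
    rw [e] at this
    linarith
  -- basic quadratic facts
  have hSQ : ∀ x : Fin a → ℝ, pl * (x ⬝ᵥ x) ≤ x ⬝ᵥ (S *ᵥ x) := by
    intro x; have := hlowQ x 0; simpa using this
  have hRQ : ∀ y : Fin b → ℝ, pl * (y ⬝ᵥ y) ≤ y ⬝ᵥ (R *ᵥ y) := by
    intro y; have := hlowQ 0 y; simpa using this
  -- R is positive definite
  have hRpd : R.PosDef := by
    refine Matrix.PosDef.of_dotProduct_mulVec_pos ?_ ?_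
    · rw [Matrix.IsHermitian]
      ext i j
      simp [Matrix.conjTranspose_apply]
      exact congrFun (congrFun hR i) j
    · intro y hy
      rw [star_trivial]
      have h1 := hRQ y
      have h2 : 0 < y ⬝ᵥ y := by
        rcases (dotProduct_self_eq_zero (v := y)).not.mpr hy with h
        have : 0 ≤ y ⬝ᵥ y := Finset.sum_nonneg fun i _ => mul_self_nonneg _
        rcases this.lt_or_eq with h' | h'
        · exact h'
        · exact absurd h'.symm h
      calc (0:ℝ) < pl * (y ⬝ᵥ y) := by positivity
        _ ≤ _ := h1
      -- star y = y
  have hRunit : IsUnit R := hRpd.isUnit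
  have hRRinv : R * R⁻¹ = 1 := Matrix.mul_nonsing_inv R (Matrix.isUnit_iff_isUnit_det R |>.mp hRunit)
  have hRinvpsd : R⁻¹.PosSemidef := hRpd.inv.posSemidef
  -- norms of T and Tᵀ
  have hTt : ∀ x : Fin a → ℝ, (Tᵀ *ᵥ x) ⬝ᵥ (Tᵀ *ᵥ x) ≤ pu ^ 2 * (x ⬝ᵥ x) := by
    intro x
    set w := Tᵀ *ᵥ x with hw
    have h1 := hupQ (pu • x) w
    have e1 : (pu • x) ⬝ᵥ (S *ᵥ (pu • x)) = pu ^ 2 * (x ⬝ᵥ (S *ᵥ x)) := by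
      rw [Matrix.mulVec_smul, smul_dotProduct, dotProduct_smul]
      simp [smul_eq_mul]; ring
    have e2 : (pu • x) ⬝ᵥ (T *ᵥ w) = pu * (w ⬝ᵥ w) := by
      rw [smul_dotProduct, smul_eq_mul, Matrix.dotProduct_mulVec,
        ← Matrix.mulVec_transpose, ← hw]
    have e3 : w ⬝ᵥ (Tᵀ *ᵥ (pu • x)) = pu * (w ⬝ᵥ w) := by
      rw [Matrix.mulVec_smul, dotProduct_smul, smul_eq_mul, ← hw]
    have e5 : (pu • x) ⬝ᵥ (pu • x) = pu ^ 2 * (x ⬝ᵥ x) := by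
      rw [smul_dotProduct, dotProduct_smul]
      simp [smul_eq_mul]; ring
    rw [e1, e2, e3, e5] at h1
    have hx : 0 ≤ x ⬝ᵥ x := Finset.sum_nonneg fun i _ => mul_self_nonneg _
    have hww : 0 ≤ w ⬝ᵥ w := Finset.sum_nonneg fun i _ => mul_self_nonneg _
    have hS0 : 0 ≤ x ⬝ᵥ (S *ᵥ x) := le_trans (mul_nonneg hpl.le hx) (hSQ x)
    have hR0 : 0 ≤ w ⬝ᵥ (R *ᵥ w) := le_trans (mul_nonneg hpl.le hww) (hRQ w)
    have h4 : pu * (w ⬝ᵥ w) ≤ pu * (pu ^ 2 * (x ⬝ᵥ x)) := by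
      nlinarith [mul_nonneg (sq_nonneg pu) hS0]
    exact (mul_le_mul_iff_right₀ hpu).mp h4
  have hT : ∀ y : Fin b → ℝ, (T *ᵥ y) ⬝ᵥ (T *ᵥ y) ≤ pu ^ 2 * (y ⬝ᵥ y) := by
    intro y
    set v := T *ᵥ y with hv
    have h1 := hupQ v (pu • y)
    have e1 : v ⬝ᵥ (T *ᵥ (pu • y)) = pu * (v ⬝ᵥ v) := by
      rw [Matrix.mulVec_smul, dotProduct_smul, smul_eq_mul, ← hv]
    have e2 : (pu • y) ⬝ᵥ (Tᵀ *ᵥ v) = pu * (v ⬝ᵥ v) := by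
      rw [smul_dotProduct, smul_eq_mul, Matrix.dotProduct_mulVec,
        Matrix.vecMul_transpose, ← hv, dotProduct_comm]
    have e3 : (pu • y) ⬝ᵥ (R *ᵥ (pu • y)) = pu ^ 2 * (y ⬝ᵥ (R *ᵥ y)) := by
      rw [Matrix.mulVec_smul, smul_dotProduct, dotProduct_smul]
      simp [smul_eq_mul]; ring
    have e4 : (pu • y) ⬝ᵥ (pu • y) = pu ^ 2 * (y ⬝ᵥ y) := by
      rw [smul_dotProduct, dotProduct_smul]
      simp [smul_eq_mul]; ring
    rw [e1, e2, e3, e4] at h1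
    have hy : 0 ≤ y ⬝ᵥ y := Finset.sum_nonneg fun i _ => mul_self_nonneg _
    have hvv : 0 ≤ v ⬝ᵥ v := Finset.sum_nonneg fun i _ => mul_self_nonneg _
    have hS0 : 0 ≤ v ⬝ᵥ (S *ᵥ v) := le_trans (mul_nonneg hpl.le hvv) (hSQ v)
    have hR0 : 0 ≤ y ⬝ᵥ (R *ᵥ y) := le_trans (mul_nonneg hpl.le hy) (hRQ y)
    have h4 : pu * (v ⬝ᵥ v) ≤ pu * (pu ^ 2 * (y ⬝ᵥ y)) := by
      nlinarith [mul_nonneg (sq_nonneg pu) hR0]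
    exact (mul_le_mul_iff_right₀ hpu).mp h4
  have hTnorm : ‖T‖ ≤ pu := opnorm_le_of_quad T hpu.le hT
  have hTtnorm : ‖Tᵀ‖ ≤ pu := opnorm_le_of_quad Tᵀ hpu.le hTt
  have hTTt : ‖T * Tᵀ‖ ≤ pu ^ 2 := by
    calc ‖T * Tᵀ‖ ≤ ‖T‖ * ‖Tᵀ‖ := Matrix.l2_opNorm_mul T Tᵀ
      _ ≤ pu * pu := mul_le_mul hTnorm hTtnorm (norm_nonneg _) hpu.le
      _ = pu ^ 2 := (sq pu).symm
  -- Schur complement quadratic form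
  have hPquad : ∀ x : Fin a → ℝ,
      x ⬝ᵥ ((S - T * R⁻¹ * Tᵀ) *ᵥ x) = x ⬝ᵥ (S *ᵥ x) - (Tᵀ *ᵥ x) ⬝ᵥ (R⁻¹ *ᵥ (Tᵀ *ᵥ x)) := by
    intro x
    rw [Matrix.sub_mulVec, dotProduct_sub]
    congr 1
    rw [← Matrix.mulVec_mulVec, ← Matrix.mulVec_mulVec, Matrix.dotProduct_mulVec x T,
      ← Matrix.mulVec_transpose]
  -- key identity: the Schur form equals the block form at (x, -(R⁻¹ *ᵥ (Tᵀ *ᵥ x)))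
  have hkey : ∀ x : Fin a → ℝ,
      x ⬝ᵥ (S *ᵥ x) + x ⬝ᵥ (T *ᵥ (-(R⁻¹ *ᵥ (Tᵀ *ᵥ x)))) +
        (-(R⁻¹ *ᵥ (Tᵀ *ᵥ x))) ⬝ᵥ (Tᵀ *ᵥ x) +
        (-(R⁻¹ *ᵥ (Tᵀ *ᵥ x))) ⬝ᵥ (R *ᵥ (-(R⁻¹ *ᵥ (Tᵀ *ᵥ x)))) =
        x ⬝ᵥ ((S - T * R⁻¹ * Tᵀ) *ᵥ x) := by
    intro x
    set w := Tᵀ *ᵥ x with hw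
    have eR : R *ᵥ (R⁻¹ *ᵥ w) = w := by
      rw [Matrix.mulVec_mulVec, hRRinv, Matrix.one_mulVec]
    have e1 : x ⬝ᵥ (T *ᵥ (-(R⁻¹ *ᵥ w))) = -(w ⬝ᵥ (R⁻¹ *ᵥ w)) := by
      rw [Matrix.mulVec_neg, dotProduct_neg, Matrix.dotProduct_mulVec x T,
        ← Matrix.mulVec_transpose, ← hw]
    have e2 : (-(R⁻¹ *ᵥ w)) ⬝ᵥ w = -((R⁻¹ *ᵥ w) ⬝ᵥ w) := by
      rw [neg_dotProduct]
    have e3 : (-(R⁻¹ *ᵥ w)) ⬝ᵥ (R *ᵥ (-(R⁻¹ *ᵥ w))) = (R⁻¹ *ᵥ w) ⬝ᵥ w := by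
      rw [Matrix.mulVec_neg, neg_dotProduct, dotProduct_neg, neg_neg, eR]
    rw [e1, e2, e3, hPquad x, ← hw]
    have h : w ⬝ᵥ (R⁻¹ *ᵥ w) = (R⁻¹ *ᵥ w) ⬝ᵥ w := dotProduct_comm _ _
    linarith [h]
  -- Hermitian-ness of the Schur complement
  have hPsymm : (S - T * R⁻¹ * Tᵀ).IsHermitian := by
    have hRinv : (R⁻¹)ᵀ = R⁻¹ := by
      rw [Matrix.transpose_nonsing_inv, hR]
    rw [Matrix.IsHermitian]
    ext i j
    have : (S - T * R⁻¹ * Tᵀ)ᵀ = S - T * R⁻¹ * Tᵀ := by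
      rw [Matrix.transpose_sub, hS, Matrix.transpose_mul, Matrix.transpose_mul,
        Matrix.transpose_transpose, hRinv, Matrix.mul_assoc]
    simp [Matrix.conjTranspose_apply]
    exact congrFun (congrFun this i) j
  refine ⟨hRunit, hTTt, ?_, ?_⟩
  · -- lower bound
    refine Matrix.PosSemidef.of_dotProduct_mulVec_nonneg ?_ ?_
    · have h1 : (pl • (1 : Matrix (Fin a) (Fin a) ℝ)).IsHermitian := by
        rw [Matrix.IsHermitian, Matrix.conjTranspose_smul, star_trivial,
          Matrix.isHermitian_one.eq]
      exact hPsymm.sub h1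
    · intro x
      rw [star_trivial, Matrix.sub_mulVec, dotProduct_sub, Matrix.smul_mulVec,
        Matrix.one_mulVec, dotProduct_smul, smul_eq_mul]
      set y := -(R⁻¹ *ᵥ (Tᵀ *ᵥ x)) with hy
      have h1 := hlowQ x y
      have h2 := hkey x
      rw [← hy] at h2
      have hyy : 0 ≤ y ⬝ᵥ y := Finset.sum_nonneg fun i _ => mul_self_nonneg _
      nlinarith [mul_nonneg hpl.le hyy]
  · -- upper bound
    refine Matrix.PosSemidef.of_dotProduct_mulVec_nonneg ?_ ?_
    · have h1 : ((pu * (1 + pu ^ 2 / pl ^ 2)) • (1 : Matrix (Fin a) (Fin a) ℝ)).IsHermitian := by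
        rw [Matrix.IsHermitian, Matrix.conjTranspose_smul, star_trivial,
          Matrix.isHermitian_one.eq]
      exact h1.sub hPsymm
    · intro x
      rw [star_trivial, Matrix.sub_mulVec, dotProduct_sub, Matrix.smul_mulVec,
        Matrix.one_mulVec, dotProduct_smul, smul_eq_mul]
      have h1 : x ⬝ᵥ (S *ᵥ x) ≤ pu * (x ⬝ᵥ x) := by
        have := hupQ x 0; simpa using this
      have h2 : 0 ≤ (Tᵀ *ᵥ x) ⬝ᵥ (R⁻¹ *ᵥ (Tᵀ *ᵥ x)) := by
        have := hRinvpsd.dotProduct_mulVec_nonneg (Tᵀ *ᵥ x); rwa [star_trivial] at this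
      have h3 := hPquad x
      have hx : 0 ≤ x ⬝ᵥ x := Finset.sum_nonneg fun i _ => mul_self_nonneg _
      have h4 : pu ≤ pu * (1 + pu ^ 2 / pl ^ 2) := by
        have : 0 ≤ pu ^ 2 / pl ^ 2 := by positivity
        nlinarith
      nlinarith [mul_nonneg (sub_nonneg.mpr h4) hx]
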